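/- Let D = Z_2(t) and A, B ∈ D. The function f : D → D defined by f((P(t²)+Q(t²)t)/(R(t²)+S(t²)t)) = ((P(t)R(t)+Q(t)S(t)t)A + (P(t)S(t)+Q(t)R(t))B)/(R(t²)+S(t²)t) is additive and satisfies f(1) = A and f(t) = B. -/

import Mathlib

open Polynomial

theorem stmt16_decomp (N : Polynomial (ZMod 2)) :
    ∃ P Q : Polynomial (ZMod 2), N = P.comp (X^2) + Q.comp (X^2) * X := by
  induction N using Polynomial.induction_on' with
  | add p q hp hq =>
    obtain ⟨P1, Q1, h1⟩ := hp; obtain ⟨P2, Q2, h2⟩ := hq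
    exact ⟨P1+P2, Q1+Q2, by simp [h1, h2, add_comp, add_mul]; ring⟩
  | monomial n a =>
    rcases Nat.even_or_odd n with ⟨k, hk⟩ | ⟨k, hk⟩
    · refine ⟨monomial k a, 0, ?_⟩
      rw [monomial_comp, ← pow_mul, C_mul_X_pow_eq_monomial, hk, two_mul]
      simp
    · refine ⟨0, monomial k a, ?_⟩
      rw [monomial_comp, ← pow_mul, mul_assoc, ← pow_succ, C_mul_X_pow_eq_monomial, hk]
      simp

theorem stmt16_alg (p : Polynomial (ZMod 2)) :
    algebraMap (Polynomial (ZMod 2)) (RatFunc (ZMod 2)) p = aeval (RatFunc.X : RatFunc (ZMod 2)) p := by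
  have := Polynomial.aeval_algHom_apply
    (IsScalarTower.toAlgHom (ZMod 2) (Polynomial (ZMod 2)) (RatFunc (ZMod 2))) X p
  simpa [RatFunc.algebraMap_X] using this.symm

theorem stmt16_aev2 (p : Polynomial (ZMod 2)) :
    aeval ((RatFunc.X : RatFunc (ZMod 2))^2) p = aeval (RatFunc.X : RatFunc (ZMod 2)) (p.comp (X^2)) := by
  rw [aeval_comp]; simp

open Polynomial in
theorem stmt_16 (A B : RatFunc (ZMod 2)) (f : RatFunc (ZMod 2) → RatFunc (ZMod 2))
    (hf : ∀ P Q R S : Polynomial (ZMod 2),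
      aeval ((RatFunc.X : RatFunc (ZMod 2)) ^ 2) R + aeval ((RatFunc.X : RatFunc (ZMod 2)) ^ 2) S * (RatFunc.X : RatFunc (ZMod 2)) ≠ 0 →
      f ((aeval ((RatFunc.X : RatFunc (ZMod 2)) ^ 2) P + aeval ((RatFunc.X : RatFunc (ZMod 2)) ^ 2) Q * (RatFunc.X : RatFunc (ZMod 2))) /
          (aeval ((RatFunc.X : RatFunc (ZMod 2)) ^ 2) R + aeval ((RatFunc.X : RatFunc (ZMod 2)) ^ 2) S * (RatFunc.X : RatFunc (ZMod 2)))) =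
        ((aeval (RatFunc.X : RatFunc (ZMod 2)) P * aeval (RatFunc.X : RatFunc (ZMod 2)) R +
            aeval (RatFunc.X : RatFunc (ZMod 2)) Q * aeval (RatFunc.X : RatFunc (ZMod 2)) S * (RatFunc.X : RatFunc (ZMod 2))) * A +
          (aeval (RatFunc.X : RatFunc (ZMod 2)) P * aeval (RatFunc.X : RatFunc (ZMod 2)) S + aeval (RatFunc.X : RatFunc (ZMod 2)) Q * aeval (RatFunc.X : RatFunc (ZMod 2)) R) * B) /
          (aeval ((RatFunc.X : RatFunc (ZMod 2)) ^ 2) R + aeval ((RatFunc.X : RatFunc (ZMod 2)) ^ 2) S * (RatFunc.X : RatFunc (ZMod 2)))) :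
    (∀ x y, f (x + y) = f x + f y) ∧ f 1 = A ∧ f (RatFunc.X : RatFunc (ZMod 2)) = B := by
  set t : RatFunc (ZMod 2) := RatFunc.X with ht
  have hrep : ∀ (n P Q : Polynomial (ZMod 2)), n = P.comp (X^2) + Q.comp (X^2) * X →
      aeval (t^2) P + aeval (t^2) Q * t = algebraMap _ _ n := by
    intro n P Q h
    rw [stmt16_alg, h]
    simp [stmt16_aev2, ht]
  refine ⟨?_, ?_, ?_⟩
  · intro x y
    obtain ⟨P1, Q1, h1⟩ := stmt16_decomp (x.num * y.denom)
    obtain ⟨P2, Q2, h2⟩ := stmt16_decomp (y.num * x.denom)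
    obtain ⟨R, S, hd⟩ := stmt16_decomp (x.denom * y.denom)
    have hd0 : x.denom * y.denom ≠ 0 := mul_ne_zero x.denom_ne_zero y.denom_ne_zero
    have hden := hrep _ _ _ hd
    have hne : aeval (t^2) R + aeval (t^2) S * t ≠ 0 := by
      rw [hden]; exact RatFunc.algebraMap_ne_zero hd0
    have hxd : algebraMap (Polynomial (ZMod 2)) (RatFunc (ZMod 2)) x.denom ≠ 0 :=
      RatFunc.algebraMap_ne_zero x.denom_ne_zero
    have hyd : algebraMap (Polynomial (ZMod 2)) (RatFunc (ZMod 2)) y.denom ≠ 0 :=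
      RatFunc.algebraMap_ne_zero y.denom_ne_zero
    have hx : x = algebraMap (Polynomial (ZMod 2)) (RatFunc (ZMod 2)) (x.num * y.denom) /
        algebraMap (Polynomial (ZMod 2)) (RatFunc (ZMod 2)) (x.denom * y.denom) := by
      rw [map_mul, map_mul, mul_div_mul_right _ _ hyd, RatFunc.num_div_denom]
    have hy : y = algebraMap (Polynomial (ZMod 2)) (RatFunc (ZMod 2)) (y.num * x.denom) /
        algebraMap (Polynomial (ZMod 2)) (RatFunc (ZMod 2)) (x.denom * y.denom) := by
      rw [map_mul, map_mul, mul_comm ((algebraMap (Polynomial (ZMod 2)) (RatFunc (ZMod 2))) x.denom),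
        mul_div_mul_right _ _ hxd, RatFunc.num_div_denom]
    have h12 : x.num * y.denom + y.num * x.denom =
        (P1 + P2).comp (X^2) + (Q1 + Q2).comp (X^2) * X := by
      rw [h1, h2, add_comp, add_comp]; ring
    have e1 := hf P1 Q1 R S hne
    have e2 := hf P2 Q2 R S hne
    have e3 := hf (P1 + P2) (Q1 + Q2) R S hne
    rw [hrep _ _ _ h1, hden] at e1
    rw [hrep _ _ _ h2, hden] at e2
    rw [hrep _ _ _ h12, hden] at e3
    have hxy : x + y = algebraMap (Polynomial (ZMod 2)) (RatFunc (ZMod 2))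
        (x.num * y.denom + y.num * x.denom) /
        algebraMap (Polynomial (ZMod 2)) (RatFunc (ZMod 2)) (x.denom * y.denom) := by
      rw [map_add, add_div, ← hx, ← hy]
    rw [← hx] at e1
    rw [← hy] at e2
    rw [← hxy] at e3
    rw [e3, e1, e2, ← add_div]
    congr 1
    simp only [map_add]
    ring
  · have hne : aeval (t^2) (1 : Polynomial (ZMod 2)) + aeval (t^2) (0 : Polynomial (ZMod 2)) * t ≠ 0 := by
      simp
    have := hf 1 0 1 0 hne
    simpa using this
  · have hne : aeval (t^2) (1 : Polynomial (ZMod 2)) + aeval (t^2) (0 : Polynomial (ZMod 2)) * t ≠ 0 := by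
      simp
    have := hf 0 1 1 0 hne
    simpa using this
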